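/- For an odd prime p, the edge-connectivity of the unit graph G(Z_{2p}) equals p-1. -/

import Mathlib

open SimpleGraph Finset
open scoped Classical

/-- The unit graph of a commutative ring: distinct `x, y` adjacent iff `x + y` is a unit. -/
def unitGraphR (R : Type*) [CommRing R] : SimpleGraph R where
  Adj x y := x ≠ y ∧ IsUnit (x + y)
  symm := ⟨fun x y ⟨h1, h2⟩ => ⟨h1.symm, by rwa [add_comm]⟩⟩
  loopless := ⟨fun x ⟨h, _⟩ => h rfl⟩

/-- The unit graph of `ZMod n`. -/
def unitGraph (n : ℕ) : SimpleGraph (ZMod n) := unitGraphR (ZMod n)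

/-- The number of edges of `G` with one endpoint in `W` and the other outside `W`. -/
noncomputable def cutSize {V : Type*} [Fintype V] (G : SimpleGraph V) (W : Finset V) : ℕ :=
  (G.edgeFinset.filter (fun e => (∃ x ∈ e, x ∈ W) ∧ (∃ x ∈ e, x ∉ W))).card

/-- The edge-connectivity of `G`: minimum cut size over nonempty proper vertex subsets. -/
noncomputable def edgeConn {V : Type*} [Fintype V] (G : SimpleGraph V) : ℕ :=
  sInf {n | ∃ W : Finset V, W.Nonempty ∧ W ≠ Finset.univ ∧ n = cutSize G W}

/-- The incidence matrix of `G` over `F_2`, rows indexed by vertices, columns by edges. -/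
noncomputable def incMat {V : Type*} [Fintype V] (G : SimpleGraph V) :
    Matrix V G.edgeFinset (ZMod 2) :=
  fun v e => if v ∈ (e : Sym2 V) then 1 else 0

/-- The binary code generated by the rows of the incidence matrix of `G`. -/
noncomputable def rowCode {V : Type*} [Fintype V] (G : SimpleGraph V) :
    Submodule (ZMod 2) (G.edgeFinset → ZMod 2) :=
  Submodule.span (ZMod 2) (Set.range (incMat G))

/-- The minimum Hamming weight of a nonzero codeword of the incidence-matrix code of `G`. -/
noncomputable def minDist {V : Type*} [Fintype V] (G : SimpleGraph V) : ℕ :=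
  sInf {w | ∃ c ∈ rowCode G, c ≠ 0 ∧ w = hammingNorm c}

noncomputable def ordCut {V : Type*} [Fintype V] (G : SimpleGraph V) (W : Finset V) : ℕ :=
  (Finset.univ.filter fun q : V × V => q.1 ∈ W ∧ q.2 ∉ W ∧ G.Adj q.1 q.2).card

noncomputable def Wside (p : ℕ) [NeZero p] (c : ZMod 2) (W : Finset (ZMod 2 × ZMod p)) :
    Finset (ZMod p) :=
  Finset.univ.filter fun b => (c, b) ∈ W

lemma map_ne_univ {V V' : Type*} [Fintype V] [Fintype V'] (φ : V ≃ V') {W : Finset V}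
    (h : W ≠ Finset.univ) : W.map φ.toEmbedding ≠ Finset.univ := by
  intro hc
  apply h
  rw [Finset.eq_univ_iff_forall] at hc ⊢
  intro v
  have := hc (φ v)
  rwa [Finset.mem_map_equiv, Equiv.symm_apply_apply] at this


lemma cutSize_eq_ordCut {V : Type*} [Fintype V] (G : SimpleGraph V) (W : Finset V) :
    cutSize G W = ordCut G W := by
  classical
  unfold cutSize ordCut
  symm
  apply Finset.card_bij (fun q _ => s(q.1, q.2))
  · rintro ⟨x, y⟩ hq
    simp only [Finset.mem_filter, Finset.mem_univ, true_and] at hq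
    obtain ⟨h1, h2, h3⟩ := hq
    simp only [Finset.mem_filter, SimpleGraph.mem_edgeFinset, SimpleGraph.mem_edgeSet]
    exact ⟨h3, ⟨x, by simp, h1⟩, ⟨y, by simp, h2⟩⟩
  · rintro ⟨x, y⟩ hq1 ⟨x', y'⟩ hq2 h
    simp only [Finset.mem_filter, Finset.mem_univ, true_and] at hq1 hq2
    rw [Sym2.eq_iff] at h
    rcases h with ⟨rfl, rfl⟩ | ⟨rfl, rfl⟩
    · rfl
    · exact absurd hq2.1 hq1.2.1
  · intro e he
    revert he
    induction e using Sym2.ind with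
    | _ x y =>
      intro he
      simp only [Finset.mem_filter, SimpleGraph.mem_edgeFinset, SimpleGraph.mem_edgeSet,
        Sym2.mem_iff] at he
      obtain ⟨hadj, ⟨u, hu, huW⟩, ⟨v, hv, hvW⟩⟩ := he
      by_cases hx : x ∈ W
      · have hy : y ∉ W := by
          rcases hv with rfl | rfl
          · exact absurd hx hvW
          · exact hvW
        exact ⟨(x, y), by simp [hx, hy, hadj], rfl⟩
      · have hy : y ∈ W := by
          rcases hu with rfl | rfl
          · exact absurd huW hx
          · exact huW
        exact ⟨(y, x), by simp [hy, hx, hadj.symm], Sym2.eq_swap⟩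

lemma ordCut_map {V V' : Type*} [Fintype V] [Fintype V'] (G : SimpleGraph V) (H : SimpleGraph V')
    (φ : V ≃ V') (hφ : ∀ x y, G.Adj x y ↔ H.Adj (φ x) (φ y)) (W : Finset V) :
    ordCut G W = ordCut H (W.map φ.toEmbedding) := by
  unfold ordCut
  apply Finset.card_bij (fun q _ => (φ q.1, φ q.2))
  · rintro ⟨x, y⟩ hq
    simp only [Finset.mem_filter, Finset.mem_univ, true_and, Finset.mem_map_equiv,
      Equiv.symm_apply_apply] at hq ⊢
    exact ⟨hq.1, hq.2.1, (hφ x y).mp hq.2.2⟩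
  · rintro ⟨x, y⟩ _ ⟨x', y'⟩ _ h
    simp only [Prod.mk.injEq] at h
    exact Prod.ext (φ.injective h.1) (φ.injective h.2)
  · rintro ⟨x, y⟩ hq
    refine ⟨(φ.symm x, φ.symm y), ?_, by simp⟩
    simp only [Finset.mem_filter, Finset.mem_univ, true_and, Finset.mem_map_equiv] at hq ⊢
    refine ⟨hq.1, hq.2.1, ?_⟩
    rw [hφ]
    simpa using hq.2.2


lemma key_ineq (p a b a' b' m1 m2 X Y : ℕ)
    (hp : 3 ≤ p) (ha : a + a' = p) (hb : b + b' = p)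
    (h1 : X + m1 = a * b') (h2 : Y + m2 = b * a')
    (hm1a : m1 ≤ a) (hm1b : m1 ≤ b') (hm2b : m2 ≤ b) (hm2a : m2 ≤ a')
    (h0 : ¬(a = 0 ∧ b = 0)) (h3 : ¬(a' = 0 ∧ b' = 0)) :
    p - 1 ≤ X + Y := by
  -- boundary cases
  rcases Nat.eq_zero_or_pos a with rfl | hapos
  · -- a = 0 : b ≥ 1, a' = p, Y ≥ b*(a'-1) ≥ a'-1 = p-1
    have hb1 : 1 ≤ b := by omega
    have e1 : b * a' = b * (a' - 1) + b := by
      conv_lhs => rw [← Nat.sub_add_cancel (show 1 ≤ a' by omega)]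
      ring
    have e2 : 1 * (a' - 1) ≤ b * (a' - 1) := Nat.mul_le_mul_right _ hb1
    omega
  rcases Nat.eq_zero_or_pos b with rfl | hbpos
  · have ha1 : 1 ≤ a := hapos
    have e1 : a * b' = a * (b' - 1) + a := by
      conv_lhs => rw [← Nat.sub_add_cancel (show 1 ≤ b' by omega)]
      ring
    have e2 : 1 * (b' - 1) ≤ a * (b' - 1) := Nat.mul_le_mul_right _ ha1
    omega
  rcases Nat.eq_zero_or_pos a' with rfl | ha'pos
  · -- a' = 0: a = p ≥ 3, b' ≥ 1, X ≥ (a-1)*b' ≥ a-1 = p-1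
    have hb'1 : 1 ≤ b' := by omega
    have e1 : a * b' = (a - 1) * b' + b' := by
      conv_lhs => rw [← Nat.sub_add_cancel (show 1 ≤ a by omega)]
      ring
    have e2 : (a - 1) * 1 ≤ (a - 1) * b' := Nat.mul_le_mul_left _ hb'1
    omega
  rcases Nat.eq_zero_or_pos b' with rfl | hb'pos
  · have ha'1 : 1 ≤ a' := ha'pos
    have e1 : b * a' = (b - 1) * a' + a' := by
      conv_lhs => rw [← Nat.sub_add_cancel (show 1 ≤ b by omega)]
      ring
    have e2 : (b - 1) * 1 ≤ (b - 1) * a' := Nat.mul_le_mul_left _ ha'1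
    omega
  -- interior: all ≥ 1
  by_cases hab : 2 ≤ a ∧ 2 ≤ b'
  · -- X ≥ b'
    have hX : 2 * b' ≤ a * b' := Nat.mul_le_mul_right b' hab.1
    -- Y ≥ b - 1
    rcases Nat.lt_or_ge a' 2 with h2' | h2'
    · have ha'1 : a' = 1 := by omega
      subst ha'1
      omega
    · have hY : 2 * b ≤ a' * b := Nat.mul_le_mul_right b h2'
      have : b * a' = a' * b := Nat.mul_comm _ _
      omega
  by_cases hba : 2 ≤ b ∧ 2 ≤ a'
  · have hY : 2 * a' ≤ b * a' := Nat.mul_le_mul_right a' hba.1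
    rcases Nat.lt_or_ge b' 2 with h2' | h2'
    · have : b' = 1 := by omega
      subst this
      omega
    · have hX : 2 * a ≤ b' * a := Nat.mul_le_mul_right a h2'
      have : a * b' = b' * a := Nat.mul_comm _ _
      omega
  -- remaining: (a = 1 ∨ b' = 1) ∧ (b = 1 ∨ a' = 1)
  have hc1 : a = 1 ∨ b' = 1 := by omega
  have hc2 : b = 1 ∨ a' = 1 := by omega
  rcases hc1 with rfl | hb'1
  · rcases hc2 with rfl | ha'1
    · -- a = 1, b = 1 : X ≥ b' - 1 = p - 2, Y ≥ a' - 1 = p - 2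
      omega
    · -- a = 1, a' = 1 → p = 2, contradiction
      omega
  · subst hb'1
    rcases hc2 with rfl | ha'1
    · omega
    · subst ha'1
      -- b' = 1, a' = 1 : X + m1 = a, m1 ≤ 1; Y + m2 = b, m2 ≤ 1
      omega

lemma isUnit_prod_iff {M N : Type*} [CommMonoid M] [CommMonoid N] (x : M × N) :
    IsUnit x ↔ IsUnit x.1 ∧ IsUnit x.2 := by
  rw [isUnit_iff_exists_inv, isUnit_iff_exists_inv, isUnit_iff_exists_inv]
  constructor
  · rintro ⟨b, hb⟩
    rw [Prod.ext_iff] at hb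
    exact ⟨⟨b.1, hb.1⟩, ⟨b.2, hb.2⟩⟩
  · rintro ⟨⟨b1, h1⟩, ⟨b2, h2⟩⟩
    exact ⟨(b1, b2), Prod.ext h1 h2⟩

lemma adj_prod (p : ℕ) [Fact p.Prime] (x y : ZMod 2 × ZMod p) :
    (unitGraphR (ZMod 2 × ZMod p)).Adj x y ↔ x.1 ≠ y.1 ∧ x.2 + y.2 ≠ 0 := by
  have h2 : ∀ a b : ZMod 2, a + b ≠ 0 ↔ a ≠ b := by decide
  constructor
  · rintro ⟨hxy, hu⟩
    rw [isUnit_prod_iff] at hu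
    refine ⟨(h2 _ _).mp ?_, ?_⟩
    · exact isUnit_iff_ne_zero.mp hu.1
    · exact isUnit_iff_ne_zero.mp hu.2
  · rintro ⟨h1, hs⟩
    refine ⟨fun h => h1 (congrArg Prod.fst h), ?_⟩
    rw [isUnit_prod_iff]
    exact ⟨isUnit_iff_ne_zero.mpr ((h2 _ _).mpr h1), isUnit_iff_ne_zero.mpr hs⟩

section Counting
variable (p : ℕ) [NeZero p]

lemma cardT (A B : Finset (ZMod p)) :
    ((A ×ˢ Bᶜ).filter fun q : ZMod p × ZMod p => q.1 + q.2 ≠ 0).card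
      + (A.filter fun b => -b ∉ B).card
      = A.card * (Fintype.card (ZMod p) - B.card) := by
  classical
  have hsplit := Finset.card_filter_add_card_filter_not
    (s := A ×ˢ Bᶜ) (p := fun q : ZMod p × ZMod p => q.1 + q.2 ≠ 0)
  have hD : ((A ×ˢ Bᶜ).filter fun q : ZMod p × ZMod p => ¬q.1 + q.2 ≠ 0).card
      = (A.filter fun b => -b ∉ B).card := by
    symm
    apply Finset.card_bij (fun b _ => (b, -b))
    · intro b hb
      simp only [Finset.mem_filter] at hb
      simp only [Finset.mem_filter, Finset.mem_product, Finset.mem_compl, not_not]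
      exact ⟨⟨hb.1, hb.2⟩, by simp⟩
    · intro b1 _ b2 _ h
      exact congrArg Prod.fst h
    · rintro ⟨x, y⟩ hq
      simp only [Finset.mem_filter, Finset.mem_product, Finset.mem_compl, not_not] at hq
      have hy : y = -x := eq_neg_of_add_eq_zero_right hq.2
      exact ⟨x, by simp [Finset.mem_filter, hq.1.1, hy ▸ hq.1.2], by simp [hy]⟩
  rw [hD] at hsplit
  rw [hsplit, Finset.card_product, Finset.card_compl]

lemma cardM_le (A B : Finset (ZMod p)) :
    (A.filter fun b => -b ∉ B).card ≤ Fintype.card (ZMod p) - B.card := by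
  classical
  rw [← Finset.card_compl]
  apply Finset.card_le_card_of_injOn (fun b => -b)
  · intro b hb
    simp only [Finset.mem_coe, Finset.mem_filter] at hb
    simp [hb.2]
  · intro b1 _ b2 _ h
    exact neg_injective h

end Counting


lemma zmod2_cases : ∀ z : ZMod 2, z = 0 ∨ z = 1 := by decide

lemma ordCut_prod_decomp (p : ℕ) [Fact p.Prime] [NeZero p] (W : Finset (ZMod 2 × ZMod p)) :
    ordCut (unitGraphR (ZMod 2 × ZMod p)) W
      = ((Wside p 0 W ×ˢ (Wside p 1 W)ᶜ).filter fun q : ZMod p × ZMod p => q.1 + q.2 ≠ 0).card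
      + ((Wside p 1 W ×ˢ (Wside p 0 W)ᶜ).filter fun q : ZMod p × ZMod p => q.1 + q.2 ≠ 0).card := by
  classical
  set f0 : ZMod p × ZMod p → (ZMod 2 × ZMod p) × (ZMod 2 × ZMod p) :=
    fun q => ((0, q.1), (1, q.2)) with hf0
  set f1 : ZMod p × ZMod p → (ZMod 2 × ZMod p) × (ZMod 2 × ZMod p) :=
    fun q => ((1, q.1), (0, q.2)) with hf1
  have hinj0 : Function.Injective f0 := by
    intro q1 q2 h
    simp only [hf0, Prod.mk.injEq] at h
    exact Prod.ext h.1.2 h.2.2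
  have hinj1 : Function.Injective f1 := by
    intro q1 q2 h
    simp only [hf1, Prod.mk.injEq] at h
    exact Prod.ext h.1.2 h.2.2
  have h01 : (0 : ZMod 2) ≠ 1 := by decide
  have hSeq : ordCut (unitGraphR (ZMod 2 × ZMod p)) W
      = (((Wside p 0 W ×ˢ (Wside p 1 W)ᶜ).filter fun q : ZMod p × ZMod p => q.1 + q.2 ≠ 0).image f0
        ∪ ((Wside p 1 W ×ˢ (Wside p 0 W)ᶜ).filter fun q : ZMod p × ZMod p => q.1 + q.2 ≠ 0).image f1).card := by
    unfold ordCut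
    congr 1
    ext ⟨⟨a, b⟩, ⟨a', b'⟩⟩
    simp only [Finset.mem_filter, Finset.mem_univ, true_and, Finset.mem_union, Finset.mem_image,
      adj_prod, Finset.mem_product, Finset.mem_compl, Wside, hf0, hf1, Prod.mk.injEq]
    constructor
    · rintro ⟨hW, hWc, hne, hsum⟩
      rcases zmod2_cases a with rfl | rfl
      · have ha' : a' = 1 := by
          rcases zmod2_cases a' with rfl | rfl
          · exact absurd rfl hne
          · rfl
        subst ha'
        exact Or.inl ⟨(b, b'), ⟨⟨by simpa using hW, by simpa using hWc⟩, hsum⟩,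
          ⟨rfl, rfl⟩, rfl, rfl⟩
      · have ha' : a' = 0 := by
          rcases zmod2_cases a' with rfl | rfl
          · rfl
          · exact absurd rfl hne
        subst ha'
        exact Or.inr ⟨(b, b'), ⟨⟨by simpa using hW, by simpa using hWc⟩, hsum⟩,
          ⟨rfl, rfl⟩, rfl, rfl⟩
    · rintro (⟨⟨x, y⟩, ⟨⟨hx, hy⟩, hs⟩, ⟨rfl, rfl⟩, rfl, rfl⟩ | ⟨⟨x, y⟩, ⟨⟨hx, hy⟩, hs⟩, ⟨rfl, rfl⟩, rfl, rfl⟩)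
      · exact ⟨by simpa using hx, by simpa using hy, h01, hs⟩
      · exact ⟨by simpa using hx, by simpa using hy, h01.symm, hs⟩
  have hdisj : Disjoint
      (((Wside p 0 W ×ˢ (Wside p 1 W)ᶜ).filter fun q : ZMod p × ZMod p => q.1 + q.2 ≠ 0).image f0)
      (((Wside p 1 W ×ˢ (Wside p 0 W)ᶜ).filter fun q : ZMod p × ZMod p => q.1 + q.2 ≠ 0).image f1) := by
    rw [Finset.disjoint_left]
    rintro q hq0 hq1
    simp only [Finset.mem_image] at hq0 hq1
    obtain ⟨x0, _, h0⟩ := hq0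
    obtain ⟨x1, _, h1⟩ := hq1
    apply h01
    calc (0 : ZMod 2) = q.1.1 := by rw [← h0]
      _ = 1 := by rw [← h1]
  rw [hSeq, Finset.card_union_of_disjoint hdisj,
    Finset.card_image_of_injective _ hinj0, Finset.card_image_of_injective _ hinj1]

lemma ordCut_ge (p : ℕ) [Fact p.Prime] [NeZero p] (hp3 : 3 ≤ p)
    (W : Finset (ZMod 2 × ZMod p)) (hne : W.Nonempty) (hU : W ≠ Finset.univ) :
    p - 1 ≤ ordCut (unitGraphR (ZMod 2 × ZMod p)) W := by
  classical
  set A := Wside p 0 W with hA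
  set B := Wside p 1 W with hB
  have hcard : Fintype.card (ZMod p) = p := ZMod.card p
  have haP : A.card ≤ p := (Finset.card_le_univ A).trans hcard.le
  have hbP : B.card ≤ p := (Finset.card_le_univ B).trans hcard.le
  have hT0 := cardT p A B
  have hT1 := cardT p B A
  rw [hcard] at hT0 hT1
  have hm1a : (A.filter fun b => -b ∉ B).card ≤ A.card := Finset.card_filter_le _ _
  have hm2b : (B.filter fun b => -b ∉ A).card ≤ B.card := Finset.card_filter_le _ _
  have hm1b : (A.filter fun b => -b ∉ B).card ≤ p - B.card := by
    have := cardM_le p A B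
    rwa [hcard] at this
  have hm2a : (B.filter fun b => -b ∉ A).card ≤ p - A.card := by
    have := cardM_le p B A
    rwa [hcard] at this
  rw [ordCut_prod_decomp]
  refine key_ineq p A.card B.card (p - A.card) (p - B.card) _ _ _ _ hp3 (by omega) (by omega)
    hT0 hT1 hm1a hm1b hm2b hm2a ?_ ?_
  · rintro ⟨ha0, hb0⟩
    obtain ⟨⟨c, d⟩, hcd⟩ := hne
    rcases zmod2_cases c with rfl | rfl
    · have : d ∈ A := by simp [hA, Wside, hcd]
      rw [Finset.card_eq_zero.mp ha0] at this
      exact absurd this (Finset.notMem_empty d)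
    · have : d ∈ B := by simp [hB, Wside, hcd]
      rw [Finset.card_eq_zero.mp hb0] at this
      exact absurd this (Finset.notMem_empty d)
  · rintro ⟨ha0, hb0⟩
    have hAu : A = Finset.univ := Finset.eq_univ_of_card A (by omega : A.card = Fintype.card _)
    have hBu : B = Finset.univ := Finset.eq_univ_of_card B (by omega : B.card = Fintype.card _)
    apply hU
    rw [Finset.eq_univ_iff_forall]
    rintro ⟨c, d⟩
    rcases zmod2_cases c with rfl | rfl
    · have : d ∈ A := hAu ▸ Finset.mem_univ d
      simpa [hA, Wside] using this
    · have : d ∈ B := hBu ▸ Finset.mem_univ d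
      simpa [hB, Wside] using this

lemma ordCut_singleton (p : ℕ) [Fact p.Prime] [NeZero p] :
    ordCut (unitGraphR (ZMod 2 × ZMod p)) {((0 : ZMod 2), (0 : ZMod p))} = p - 1 := by
  classical
  have hW0 : Wside p 0 ({((0 : ZMod 2), (0 : ZMod p))} : Finset _) = {(0 : ZMod p)} := by
    ext x
    simp [Wside, Prod.ext_iff]
  have hW1 : Wside p 1 ({((0 : ZMod 2), (0 : ZMod p))} : Finset _) = (∅ : Finset (ZMod p)) := by
    ext x
    simp [Wside, Prod.ext_iff]
  rw [ordCut_prod_decomp, hW0, hW1]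
  have hT0 := cardT p ({(0 : ZMod p)} : Finset (ZMod p)) (∅ : Finset (ZMod p))
  have hM : (({(0 : ZMod p)} : Finset (ZMod p)).filter fun b => -b ∉ (∅ : Finset (ZMod p))).card
      = 1 := by
    rw [Finset.filter_true_of_mem (fun x _ => Finset.notMem_empty (-x))]
    exact Finset.card_singleton _
  rw [hM, Finset.card_singleton, Finset.card_empty, ZMod.card, one_mul, Nat.sub_zero] at hT0
  have hT1 : ((∅ ×ˢ ({(0 : ZMod p)} : Finset (ZMod p))ᶜ).filter
      fun q : ZMod p × ZMod p => q.1 + q.2 ≠ 0).card = 0 := by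
    rw [Finset.empty_product, Finset.filter_empty, Finset.card_empty]
  rw [hT1]
  omega


theorem unitGraph_ZMod_two_p_edgeConn (p : ℕ) [Fact p.Prime] (hodd : Odd p)
    [NeZero (2 * p)] :
    edgeConn (unitGraph (2 * p)) = p - 1 := by
  classical
  haveI : NeZero p := ⟨(Fact.out : p.Prime).pos.ne'⟩
  have hp2 : 2 ≤ p := (Fact.out : p.Prime).two_le
  have hp3 : 3 ≤ p := by
    rcases Nat.lt_or_ge p 3 with h | h
    · interval_cases p
      · exact absurd hodd (by decide)
    · exact h
  have hcop : Nat.Coprime 2 p := Nat.coprime_two_left.mpr hodd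
  set e := ZMod.chineseRemainder hcop with he
  have hadj : ∀ x y : ZMod (2 * p),
      (unitGraph (2 * p)).Adj x y ↔
        (unitGraphR (ZMod 2 × ZMod p)).Adj (e.toEquiv x) (e.toEquiv y) := by
    intro x y
    constructor
    · rintro ⟨h1, h2⟩
      refine ⟨fun h => h1 (e.injective h), ?_⟩
      have : IsUnit (e (x + y)) := h2.map e.toRingHom
      rwa [map_add] at this
    · rintro ⟨h1, h2⟩
      refine ⟨fun h => h1 (congrArg e h), ?_⟩
      have h3 : IsUnit (e (x + y)) := by rw [map_add]; exact h2
      have h4 : IsUnit (e.symm (e (x + y))) := h3.map e.symm.toRingHom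
      rwa [RingEquiv.symm_apply_apply] at h4
  have hsingleton_ne : ({((0 : ZMod 2), (0 : ZMod p))} : Finset (ZMod 2 × ZMod p))
      ≠ Finset.univ := by
    intro h
    have := congrArg Finset.card h
    rw [Finset.card_singleton, Finset.card_univ, Fintype.card_prod, ZMod.card, ZMod.card] at this
    omega
  have hset : {n | ∃ W : Finset (ZMod (2 * p)), W.Nonempty ∧ W ≠ Finset.univ ∧
        n = cutSize (unitGraph (2 * p)) W}
      = {n | ∃ W : Finset (ZMod 2 × ZMod p), W.Nonempty ∧ W ≠ Finset.univ ∧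
        n = ordCut (unitGraphR (ZMod 2 × ZMod p)) W} := by
    ext n
    simp only [Set.mem_setOf_eq]
    constructor
    · rintro ⟨W, h1, h2, rfl⟩
      exact ⟨W.map e.toEquiv.toEmbedding, h1.map, map_ne_univ _ h2,
        by rw [cutSize_eq_ordCut, ordCut_map _ _ e.toEquiv hadj W]⟩
    · rintro ⟨W, h1, h2, rfl⟩
      refine ⟨W.map e.toEquiv.symm.toEmbedding, h1.map, map_ne_univ _ h2, ?_⟩
      rw [cutSize_eq_ordCut, ordCut_map _ _ e.toEquiv hadj _]
      congr 1
      ext x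
      simp [Finset.mem_map_equiv]
  have hmem : (p - 1) ∈ {n | ∃ W : Finset (ZMod 2 × ZMod p), W.Nonempty ∧ W ≠ Finset.univ ∧
      n = ordCut (unitGraphR (ZMod 2 × ZMod p)) W} :=
    ⟨{((0 : ZMod 2), (0 : ZMod p))}, Finset.singleton_nonempty _, hsingleton_ne,
      (ordCut_singleton p).symm⟩
  rw [edgeConn, hset]
  apply le_antisymm
  · exact Nat.sInf_le hmem
  · have hne : Set.Nonempty {n | ∃ W : Finset (ZMod 2 × ZMod p), W.Nonempty ∧ W ≠ Finset.univ ∧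
        n = ordCut (unitGraphR (ZMod 2 × ZMod p)) W} := ⟨p - 1, hmem⟩
    obtain ⟨W, h1, h2, hEq⟩ := Nat.sInf_mem hne
    rw [hEq]
    exact ordCut_ge p hp3 W h1 h2
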